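/- Let H be a finite poset, K a field, and A = K[H]/I a homogeneous ASL on H. Then for any revlex term order τ on K[H] extending a linear extension of the order on H, the straightening relations in (ASL2) form a Gröbner basis of I, and in_τ(I) = J_H, the ideal generated by products xy of incomparable elements x, y ∈ H. -/

import Mathlib

open MvPolynomial

attribute [local instance] MvPolynomial.gradedAlgebra

/-- Total degree of a monomial exponent vector. -/
def mdeg {H : Type*} (μ : H →₀ ℕ) : ℕ := μ.sum fun _ e => e

/-- The (degree) reverse lexicographic order on monomials induced by the
variable order `σ` (larger `σ`-value = larger variable): `μ < ν` iff
`deg μ < deg ν`, or the degrees agree and `μ` has the strictly larger exponent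
at the `σ`-smallest variable where `μ` and `ν` differ. -/
def RevLexLT {H : Type*} (σ : H → ℕ) (μ ν : H →₀ ℕ) : Prop :=
  mdeg μ < mdeg ν ∨ (mdeg μ = mdeg ν ∧
    ∃ h, ν h < μ h ∧ ∀ h', σ h' < σ h → μ h' = ν h')

/-- `μ` is the leading (initial) monomial of `f` for the revlex order given by `σ`. -/
def IsLeadMon {K H : Type*} [Field K] (σ : H → ℕ) (f : MvPolynomial H K)
    (μ : H →₀ ℕ) : Prop :=
  μ ∈ f.support ∧ ∀ ν ∈ f.support, ν ≠ μ → RevLexLT σ ν μ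

/-- The initial ideal `in_τ(I)`, generated by the leading monomials of the
nonzero elements of `I`. -/
noncomputable def initialIdeal {K H : Type*} [Field K] (σ : H → ℕ)
    (I : Ideal (MvPolynomial H K)) : Ideal (MvPolynomial H K) :=
  Ideal.span { p | ∃ f ∈ I, ∃ μ, IsLeadMon σ f μ ∧ p = monomial μ (1 : K) }

/-- The monomial ideal `J_H` generated by the products `xy` of incomparable
elements `x, y ∈ H`. -/
noncomputable def JHIdeal (K H : Type*) [Field K] [PartialOrder H] : Ideal (MvPolynomial H K) :=
  Ideal.span { p | ∃ x y : H, ¬ x ≤ y ∧ ¬ y ≤ x ∧ p = X x * X y }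

/-- `σ : H → ℕ` encodes a linear extension of the partial order on `H`. -/
def IsLinExt {H : Type*} [PartialOrder H] (σ : H → ℕ) : Prop :=
  Function.Injective σ ∧ ∀ u v : H, u < v → σ u < σ v

/-- A monomial is standard if its support is a chain of `H`. -/
def IsStdMon {H : Type*} [PartialOrder H] (μ : H →₀ ℕ) : Prop :=
  ∀ x ∈ μ.support, ∀ y ∈ μ.support, x ≤ y ∨ y ≤ x

section ASLaux
set_option linter.unusedSectionVars false
set_option linter.unusedVariables false

variable {K H : Type*} [Field K] [Fintype H] [DecidableEq H] [PartialOrder H]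

lemma mdeg_add (μ ν : H →₀ ℕ) : mdeg (μ + ν) = mdeg μ + mdeg ν :=
  Finsupp.sum_add_index' (fun _ => rfl) (fun _ _ _ => rfl)

lemma mdeg_single (x : H) (n : ℕ) : mdeg (Finsupp.single x n) = n := by
  simp [mdeg, Finsupp.sum_single_index]

lemma exp_le_mdeg (μ : H →₀ ℕ) (h : H) : μ h ≤ mdeg μ := by
  by_cases hh : h ∈ μ.support
  · exact Finset.single_le_sum (f := fun h => μ h) (fun _ _ => Nat.zero_le _) hh
  · simp [Finsupp.notMem_support_iff.mp hh]

variable (σ : H → ℕ)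

lemma revlex_irrefl (μ : H →₀ ℕ) : ¬ RevLexLT σ μ μ := by
  rintro (h | ⟨-, h, hlt, -⟩)
  · exact lt_irrefl _ h
  · exact lt_irrefl _ hlt

lemma revlex_mdeg_le {μ ν : H →₀ ℕ} (h : RevLexLT σ μ ν) : mdeg μ ≤ mdeg ν := by
  rcases h with h | ⟨h, -⟩
  · exact h.le
  · exact h.le

lemma revlex_trans (hinj : Function.Injective σ) {a b c : H →₀ ℕ}
    (h1 : RevLexLT σ a b) (h2 : RevLexLT σ b c) : RevLexLT σ a c := by
  rcases h1 with h1 | ⟨e1, h1, hlt1, hag1⟩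
  · exact Or.inl (lt_of_lt_of_le h1 (revlex_mdeg_le σ h2))
  · rcases h2 with h2 | ⟨e2, h2, hlt2, hag2⟩
    · exact Or.inl (e1 ▸ h2)
    · refine Or.inr ⟨e1.trans e2, ?_⟩
      rcases lt_trichotomy (σ h1) (σ h2) with hc | hc | hc
      · exact ⟨h1, (hag2 h1 hc) ▸ hlt1, fun h' hh' => (hag1 h' hh').trans (hag2 h' (hh'.trans hc))⟩
      · have heq : h1 = h2 := hinj hc
        subst heq
        exact ⟨h1, lt_trans hlt2 hlt1, fun h' hh' => (hag1 h' hh').trans (hag2 h' hh')⟩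
      · exact ⟨h2, (hag1 h2 hc) ▸ hlt2, fun h' hh' => (hag1 h' (hh'.trans hc)).trans (hag2 h' hh')⟩

lemma revlex_asymm (hinj : Function.Injective σ) {a b : H →₀ ℕ}
    (h1 : RevLexLT σ a b) (h2 : RevLexLT σ b a) : False :=
  revlex_irrefl σ a (revlex_trans σ hinj h1 h2)

lemma revlex_trichotomy {μ ν : H →₀ ℕ} (h : μ ≠ ν) :
    RevLexLT σ μ ν ∨ RevLexLT σ ν μ := by
  classical
  rcases lt_trichotomy (mdeg μ) (mdeg ν) with hd | hd | hd
  · exact Or.inl (Or.inl hd)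
  · have hex : ∃ h, μ h ≠ ν h := by
      by_contra hc; push_neg at hc; exact h (Finsupp.ext hc)
    obtain ⟨a, ha⟩ := hex
    set s := (μ.support ∪ ν.support).filter (fun h => μ h ≠ ν h) with hs
    have hane : a ∈ s := by
      simp only [hs, Finset.mem_filter, Finset.mem_union, Finsupp.mem_support_iff]
      exact ⟨by omega, ha⟩
    obtain ⟨b, hb, hbmin⟩ := Finset.exists_min_image s σ ⟨a, hane⟩
    have hbne : μ b ≠ ν b := (Finset.mem_filter.mp hb).2
    have hag : ∀ h', σ h' < σ b → μ h' = ν h' := by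
      intro h' hh'
      by_contra hc
      have : h' ∈ s := by
        simp only [hs, Finset.mem_filter, Finset.mem_union, Finsupp.mem_support_iff]
        exact ⟨by omega, hc⟩
      exact absurd (hbmin h' this) (by omega)
    rcases lt_or_gt_of_ne hbne with hlt | hlt
    · exact Or.inr (Or.inr ⟨hd.symm, b, hlt, fun h' hh' => (hag h' hh').symm⟩)
    · exact Or.inl (Or.inr ⟨hd, b, hlt, hag⟩)
  · exact Or.inr (Or.inl hd)

lemma revlex_add (δ : H →₀ ℕ) {μ ν : H →₀ ℕ} (h : RevLexLT σ μ ν) :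
    RevLexLT σ (δ + μ) (δ + ν) := by
  rcases h with h | ⟨hd, e, hlt, hag⟩
  · exact Or.inl (by rw [mdeg_add, mdeg_add]; omega)
  · exact Or.inr ⟨by rw [mdeg_add, mdeg_add, hd], e,
      by simp only [Finsupp.add_apply]; omega,
      fun h' hh' => by simp only [Finsupp.add_apply, hag h' hh']⟩

lemma below_finite (ρ : H →₀ ℕ) : {τ : H →₀ ℕ | RevLexLT σ τ ρ}.Finite := by
  have hsub : {τ : H →₀ ℕ | RevLexLT σ τ ρ} ⊆
      Set.Iic (Finsupp.equivFunOnFinite.symm (fun _ => mdeg ρ)) := by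
    intro τ hτ
    rw [Set.mem_Iic, Finsupp.le_def]
    intro h
    calc τ h ≤ mdeg τ := exp_le_mdeg τ h
    _ ≤ mdeg ρ := revlex_mdeg_le σ hτ
    _ = Finsupp.equivFunOnFinite.symm (fun _ => mdeg ρ) h := by
        rfl
  exact (Set.finite_Iic _).subset hsub

/-- counting measure compatible with the revlex order -/
noncomputable def psi (ρ : H →₀ ℕ) : ℕ := Set.ncard {τ : H →₀ ℕ | RevLexLT σ τ ρ}

lemma psi_mono (hinj : Function.Injective σ)
    {μ ν : H →₀ ℕ} (h : RevLexLT σ μ ν) : psi σ μ < psi σ ν := by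
  apply Set.ncard_lt_ncard _ (below_finite σ ν)
  constructor
  · intro τ hτ; exact revlex_trans σ hinj hτ h
  · intro hsub
    exact revlex_irrefl σ μ (hsub h)

lemma lead_unique (hinj : Function.Injective σ) {f : MvPolynomial H K} {μ μ' : H →₀ ℕ}
    (h1 : IsLeadMon σ f μ) (h2 : IsLeadMon σ f μ') : μ = μ' := by
  by_contra hne
  exact revlex_asymm σ hinj (h1.2 μ' h2.1 (Ne.symm hne)) (h2.2 μ h1.1 hne)

lemma X_mul_X_eq (x y : H) : (X x * X y : MvPolynomial H K) =
    monomial (Finsupp.single x 1 + Finsupp.single y 1) 1 := by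
  rw [X, X, monomial_mul, one_mul]

lemma pair_apply_ne {x y z : H} (hx : z ≠ x) (hy : z ≠ y) :
    (Finsupp.single x 1 + Finsupp.single y 1 : H →₀ ℕ) z = 0 := by
  simp [Finsupp.single_apply, (Ne.symm hx), (Ne.symm hy)]

lemma pair_apply_left (z t : H) :
    1 ≤ (Finsupp.single z 1 + Finsupp.single t 1 : H →₀ ℕ) z := by
  simp [Finsupp.single_apply]

lemma srel_lead {σ : H → ℕ} (hσ : IsLinExt σ) {x y : H}
    (s : Finset (H × H)) (c : H × H → K)
    (hs : ∀ p ∈ s, p.1 ≤ p.2 ∧ p.1 < x ∧ p.1 < y)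
    (f : MvPolynomial H K)
    (hf : f = X x * X y - ∑ p ∈ s, c p • (X p.1 * X p.2)) :
    coeff (Finsupp.single x 1 + Finsupp.single y 1) f = 1 ∧
    IsLeadMon σ f (Finsupp.single x 1 + Finsupp.single y 1) := by
  classical
  set e : H →₀ ℕ := Finsupp.single x 1 + Finsupp.single y 1 with he
  have hne : ∀ p ∈ s, (Finsupp.single p.1 1 + Finsupp.single p.2 1 : H →₀ ℕ) ≠ e := by
    intro p hp heq
    obtain ⟨-, hzx, hzy⟩ := hs p hp
    have h0 : e p.1 = 0 := pair_apply_ne (ne_of_lt hzx) (ne_of_lt hzy)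
    have h1 := pair_apply_left p.1 p.2
    rw [heq] at h1; omega
  have hcoeff : ∀ ν : H →₀ ℕ, coeff ν f = (if e = ν then (1:K) else 0)
      - ∑ p ∈ s, c p * (if (Finsupp.single p.1 1 + Finsupp.single p.2 1 : H →₀ ℕ) = ν then 1 else 0) := by
    intro ν
    rw [hf, coeff_sub, X_mul_X_eq, coeff_monomial]
    congr 1
    rw [coeff_sum]
    refine Finset.sum_congr rfl (fun p hp => ?_)
    rw [coeff_smul, X_mul_X_eq, coeff_monomial, smul_eq_mul]
  have hc1 : coeff e f = 1 := by
    rw [hcoeff e, if_pos rfl]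
    have hz : ∀ p ∈ s, c p * (if (Finsupp.single p.1 1 + Finsupp.single p.2 1 : H →₀ ℕ) = e then (1:K) else 0) = 0 := by
      intro p hp
      rw [if_neg (hne p hp), mul_zero]
    rw [Finset.sum_congr rfl hz, Finset.sum_const_zero, sub_zero]
  refine ⟨hc1, mem_support_iff.mpr (by rw [hc1]; exact one_ne_zero), ?_⟩
  intro ν hν hνe
  have hcν := mem_support_iff.mp hν
  rw [hcoeff ν, if_neg (fun h => hνe h.symm)] at hcν
  have hex : ∃ p ∈ s, c p * (if (Finsupp.single p.1 1 + Finsupp.single p.2 1 : H →₀ ℕ) = ν then (1:K) else 0) ≠ 0 := by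
    by_contra hcon
    push_neg at hcon
    rw [Finset.sum_congr rfl hcon, Finset.sum_const_zero, sub_zero] at hcν
    exact hcν rfl
  obtain ⟨p, hp, hpne⟩ := hex
  have hν' : (Finsupp.single p.1 1 + Finsupp.single p.2 1 : H →₀ ℕ) = ν := by
    by_contra hcon; rw [if_neg hcon, mul_zero] at hpne; exact hpne rfl
  obtain ⟨hzt, hzx, hzy⟩ := hs p hp
  subst hν'
  set z := p.1; set t := p.2
  refine Or.inr ⟨by rw [mdeg_add, mdeg_add, mdeg_single, mdeg_single, mdeg_single, mdeg_single], z, ?_, ?_⟩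
  · rw [pair_apply_ne (ne_of_lt hzx) (ne_of_lt hzy)]
    exact pair_apply_left z t
  · intro h' hh'
    have hσzt : σ z ≤ σ t := by
      rcases eq_or_lt_of_le hzt with h | h
      · rw [h]
      · exact (hσ.2 _ _ h).le
    have hne1 : h' ≠ z := fun h => by rw [h] at hh'; omega
    have hne2 : h' ≠ t := fun h => by rw [h] at hh'; omega
    have hne3 : h' ≠ x := fun h => by rw [h] at hh'; have := hσ.2 z x hzx; omega
    have hne4 : h' ≠ y := fun h => by rw [h] at hh'; have := hσ.2 z y hzy; omega
    rw [pair_apply_ne hne1 hne2, pair_apply_ne hne3 hne4]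

lemma stdzero (I : Ideal (MvPolynomial H K))
    (hASL1 : LinearIndependent K
      (fun μ : {μ : H →₀ ℕ // IsStdMon μ} =>
        Ideal.Quotient.mk I (monomial μ.1 (1 : K))))
    (f : MvPolynomial H K) (hf : f ∈ I)
    (hstd : ∀ ρ ∈ f.support, IsStdMon ρ) : f = 0 := by
  classical
  set v : {μ : H →₀ ℕ // IsStdMon μ} → MvPolynomial H K ⧸ I :=
    fun μ => Ideal.Quotient.mk I (monomial μ.1 (1 : K)) with hv
  set emb : {ν : H →₀ ℕ // ν ∈ f.support} → {μ : H →₀ ℕ // IsStdMon μ} :=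
    fun ν => ⟨ν.1, hstd ν.1 ν.2⟩ with hemb
  have hembinj : Function.Injective emb := by
    intro a b hab
    apply Subtype.ext
    have : (emb a).1 = (emb b).1 := congrArg Subtype.val hab
    exact this
  set t : Finset {μ : H →₀ ℕ // IsStdMon μ} := f.support.attach.image emb with ht
  set g : {μ : H →₀ ℕ // IsStdMon μ} → K := fun μ => coeff μ.1 f with hg
  have hsum : ∑ i ∈ t, g i • v i = 0 := by
    rw [ht, Finset.sum_image (fun a _ b _ hab => hembinj hab)]
    have step : ∀ ν ∈ f.support.attach, g (emb ν) • v (emb ν)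
        = Ideal.Quotient.mk I (monomial ν.1 (coeff ν.1 f)) := by
      intro ν _
      show coeff ν.1 f • Ideal.Quotient.mk I (monomial ν.1 (1:K)) = _
      rw [← Ideal.Quotient.mkₐ_eq_mk K, ← map_smul, smul_monomial, smul_eq_mul, mul_one]
    rw [Finset.sum_congr rfl step, ← map_sum,
      Finset.sum_attach f.support (fun ν => monomial ν (coeff ν f)),
      support_sum_monomial_coeff, Ideal.Quotient.eq_zero_iff_mem]
    exact hf
  have hzero := linearIndependent_iff'.mp hASL1 t g hsum
  ext ν
  by_cases hν : ν ∈ f.support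
  · have hmem : (⟨ν, hstd ν hν⟩ : {μ : H →₀ ℕ // IsStdMon μ}) ∈ t := by
      rw [ht, Finset.mem_image]
      exact ⟨⟨ν, hν⟩, Finset.mem_attach _ _, rfl⟩
    have := hzero _ hmem
    simpa [hg] using this
  · simpa using MvPolynomial.notMem_support_iff.mp hν

end ASLaux

lemma pair_le {K H : Type*} [Field K] [Fintype H] [DecidableEq H] [PartialOrder H]
    {μ : H →₀ ℕ} {x y : H} (hx : x ∈ μ.support) (hy : y ∈ μ.support) (hxy : x ≠ y) :
    Finsupp.single x 1 + Finsupp.single y 1 ≤ μ := by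
  rw [Finsupp.le_def]
  intro h
  have hνx : μ x ≠ 0 := Finsupp.mem_support_iff.mp hx
  have hνy : μ y ≠ 0 := Finsupp.mem_support_iff.mp hy
  simp only [Finsupp.add_apply, Finsupp.single_apply]
  split_ifs with h1 h2 h3
  · exact absurd (h1.trans h2.symm) hxy
  · subst h1; omega
  · subst h3; omega
  · omega

set_option maxHeartbeats 1000000 in
lemma red {K H : Type*} [Field K] [Fintype H] [DecidableEq H] [PartialOrder H]
    (σ : H → ℕ) (hσ : IsLinExt σ)
    (I : Ideal (MvPolynomial H K))
    (srel : H → H → MvPolynomial H K)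
    (hASL2 : ∀ x y : H, ¬ x ≤ y → ¬ y ≤ x → srel x y ∈ I ∧
      ∃ (s : Finset (H × H)) (c : H × H → K),
        (∀ p ∈ s, p.1 ≤ p.2 ∧ p.1 < x ∧ p.1 < y) ∧
        srel x y = X x * X y - ∑ p ∈ s, c p • (X p.1 * X p.2))
    (hASL1 : LinearIndependent K
      (fun μ : {μ : H →₀ ℕ // IsStdMon μ} =>
        Ideal.Quotient.mk I (monomial μ.1 (1 : K)))) :
    ∀ m : ℕ, ∀ f ∈ I, (∀ ρ ∈ f.support, ¬ IsStdMon ρ → psi σ ρ < m) →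
      ∀ μ, IsLeadMon σ f μ → ¬ IsStdMon μ := by
  classical
  intro m
  induction m with
  | zero =>
    intro f hf hb μ hlm _
    have hall : ∀ ρ ∈ f.support, IsStdMon ρ := by
      intro ρ hρ; by_contra hc; exact Nat.not_lt_zero _ (hb ρ hρ hc)
    have hf0 := stdzero I hASL1 f hf hall
    rw [hf0] at hlm
    simpa using hlm.1
  | succ m ih =>
    intro f hf hb μ hlm hstd
    by_cases hallstd : ∀ ρ ∈ f.support, IsStdMon ρ
    · have hf0 := stdzero I hASL1 f hf hallstd
      rw [hf0] at hlm
      simpa using hlm.1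
    push_neg at hallstd
    obtain ⟨ν₀, hν₀s, hν₀n⟩ := hallstd
    set T := f.support.filter (fun ρ => ¬ IsStdMon ρ) with hT
    have hTne : T.Nonempty := ⟨ν₀, Finset.mem_filter.mpr ⟨hν₀s, hν₀n⟩⟩
    obtain ⟨ν, hνT, hνmax⟩ := Finset.exists_max_image T (fun ρ => psi σ ρ) hTne
    have hνs : ν ∈ f.support := (Finset.mem_filter.mp hνT).1
    have hνn : ¬ IsStdMon ν := (Finset.mem_filter.mp hνT).2
    have hνn' := hνn
    unfold IsStdMon at hνn'
    push_neg at hνn'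
    obtain ⟨x, hx, y, hy, hnc⟩ := hνn'
    obtain ⟨hnxy, hnyx⟩ := hnc
    have hxy : x ≠ y := fun h => hnxy (le_of_eq h)
    set e : H →₀ ℕ := Finsupp.single x 1 + Finsupp.single y 1 with he
    have hele : e ≤ ν := pair_le (K := K) hx hy hxy
    set δ : H →₀ ℕ := ν - e with hδdef
    have hδ : δ + e = ν := tsub_add_cancel_of_le hele
    obtain ⟨hsrelI, s, c, hsc, hform⟩ := hASL2 x y hnxy hnyx
    obtain ⟨hc1, hleadsrel⟩ := srel_lead hσ s c hsc _ hform
    set q := srel x y * monomial δ (coeff ν f) with hq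
    have hqco : ∀ τ, coeff τ q =
        if δ ≤ τ then coeff (τ - δ) (srel x y) * coeff ν f else 0 :=
      fun τ => coeff_mul_monomial' τ δ (coeff ν f) (srel x y)
    have hδν : δ ≤ ν := tsub_le_self
    have hνδ : ν - δ = e := by rw [← hδ, add_tsub_cancel_left]
    have hqn : coeff ν q = coeff ν f := by
      rw [hqco ν, if_pos hδν, hνδ, hc1, one_mul]
    have hqsupp : ∀ τ, coeff τ q ≠ 0 → τ = ν ∨ RevLexLT σ τ ν := by
      intro τ hτ
      rw [hqco τ] at hτ
      by_cases hle : δ ≤ τ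
      · rw [if_pos hle] at hτ
        have hρ : coeff (τ - δ) (srel x y) ≠ 0 := fun h => hτ (by rw [h, zero_mul])
        have hτeq : δ + (τ - δ) = τ := add_tsub_cancel_of_le hle
        by_cases hρe : τ - δ = e
        · left
          calc τ = δ + (τ - δ) := hτeq.symm
          _ = δ + e := by rw [hρe]
          _ = ν := hδ
        · right
          have hlt := hleadsrel.2 (τ - δ) (mem_support_iff.mpr hρ) hρe
          have h2 := revlex_add σ δ hlt
          rw [hτeq, hδ] at h2
          exact h2
      · rw [if_neg hle] at hτ; exact absurd rfl hτ
    set g := f - q with hgdef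
    have hg : g ∈ I := I.sub_mem hf (I.mul_mem_right _ hsrelI)
    have hg_coeff : ∀ τ, coeff τ g = coeff τ f - coeff τ q := fun τ => by rw [hgdef, MvPolynomial.coeff_sub]
    have hgν : coeff ν g = 0 := by rw [hg_coeff, hqn, sub_self]
    have hνμ : RevLexLT σ ν μ :=
      hlm.2 ν hνs (fun h => hνn (by rw [h]; exact hstd))
    have hqμ : coeff μ q = 0 := by
      by_contra hc
      rcases hqsupp μ hc with h | h
      · exact hνn (by rw [← h]; exact hstd)
      · exact revlex_asymm σ hσ.1 h hνμ
    have hgμ : coeff μ g = coeff μ f := by rw [hg_coeff, hqμ, sub_zero]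
    have hlmg : IsLeadMon σ g μ := by
      refine ⟨mem_support_iff.mpr (by rw [hgμ]; exact mem_support_iff.mp hlm.1), ?_⟩
      intro ρ hρ hρμ
      have hρc : coeff ρ g ≠ 0 := mem_support_iff.mp hρ
      by_cases hρf : coeff ρ f = 0
      · have hρq : coeff ρ q ≠ 0 := by
          intro h
          exact hρc (by rw [hg_coeff, hρf, h, sub_zero])
        rcases hqsupp ρ hρq with h | h
        · rw [h]; exact hνμ
        · exact revlex_trans σ hσ.1 h hνμ
      · exact hlm.2 ρ (mem_support_iff.mpr hρf) hρμ
    have hψν : psi σ ν ≤ m := Nat.lt_succ_iff.mp (hb ν hνs hνn)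
    have hbg : ∀ ρ ∈ g.support, ¬ IsStdMon ρ → psi σ ρ < m := by
      intro ρ hρ hρn
      have hρc : coeff ρ g ≠ 0 := mem_support_iff.mp hρ
      have hρν : ρ ≠ ν := fun h => hρc (by rw [h]; exact hgν)
      have hlt : RevLexLT σ ρ ν := by
        by_cases hρf : coeff ρ f = 0
        · have hρq : coeff ρ q ≠ 0 := by
            intro h
            exact hρc (by rw [hg_coeff, hρf, h, sub_zero])
          rcases hqsupp ρ hρq with h | h
          · exact absurd h hρν
          · exact h
        · have hρT : ρ ∈ T := Finset.mem_filter.mpr ⟨mem_support_iff.mpr hρf, hρn⟩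
          rcases revlex_trichotomy σ hρν with h | h
          · exact h
          · exact absurd (hνmax ρ hρT) (not_le.mpr (psi_mono σ hσ.1 h))
      exact lt_of_lt_of_le (psi_mono σ hσ.1 hlt) hψν
    exact ih g hg hbg μ hlmg hstd

/-- let `A = K[H]/I` be a homogeneous ASL on the finite poset
`H`, with straightening relations `srel x y = xy − ∑ λ_{zt} zt ∈ I`
(`z ≤ t`, `z < x`, `z < y`) for the incomparable pairs `x, y`, and with the
standard monomials linearly independent in `A` (ASL1).  Then for every revlex
term order extending a linear extension `σ` of the order of `H`:
the straightening relations have leading monomial `xy`, they form a Gröbner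
basis of `I` (their leading monomials generate `in_τ(I)`), and
`in_τ(I) = J_H`. -/
theorem stmt15 {K H : Type*} [Field K] [Fintype H] [DecidableEq H] [PartialOrder H]
    (I : Ideal (MvPolynomial H K))
    (hhom : I.IsHomogeneous (homogeneousSubmodule H K))
    (srel : H → H → MvPolynomial H K)
    (hASL2 : ∀ x y : H, ¬ x ≤ y → ¬ y ≤ x → srel x y ∈ I ∧
      ∃ (s : Finset (H × H)) (c : H × H → K),
        (∀ p ∈ s, p.1 ≤ p.2 ∧ p.1 < x ∧ p.1 < y) ∧
        srel x y = X x * X y - ∑ p ∈ s, c p • (X p.1 * X p.2))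
    (hASL1 : LinearIndependent K
      (fun μ : {μ : H →₀ ℕ // IsStdMon μ} =>
        Ideal.Quotient.mk I (monomial μ.1 (1 : K))))
    (σ : H → ℕ) (hσ : IsLinExt σ) :
    (∀ x y : H, ¬ x ≤ y → ¬ y ≤ x →
      IsLeadMon σ (srel x y) (Finsupp.single x 1 + Finsupp.single y 1)) ∧
    initialIdeal σ I = Ideal.span { p | ∃ x y : H, ¬ x ≤ y ∧ ¬ y ≤ x ∧
      ∃ μ, IsLeadMon σ (srel x y) μ ∧ p = monomial μ (1 : K) } ∧
    initialIdeal σ I = JHIdeal K H := by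
  classical
  have hlead : ∀ x y : H, ¬ x ≤ y → ¬ y ≤ x →
      IsLeadMon σ (srel x y) (Finsupp.single x 1 + Finsupp.single y 1) := by
    intro x y h1 h2
    obtain ⟨-, s, c, hs, hform⟩ := hASL2 x y h1 h2
    exact (srel_lead hσ s c hs _ hform).2
  have hred : ∀ f ∈ I, ∀ μ, IsLeadMon σ f μ → ¬ IsStdMon μ := by
    intro f hf μ hlm
    exact red σ hσ I srel hASL2 hASL1 (f.support.sup (fun ρ => psi σ ρ) + 1) f hf
      (fun ρ hρ _ => Nat.lt_succ_of_le (Finset.le_sup hρ)) μ hlm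
  have hJin : initialIdeal σ I = JHIdeal K H := by
    apply le_antisymm
    · rw [initialIdeal, Ideal.span_le]
      rintro p ⟨f, hf, μ, hlm, rfl⟩
      have hn := hred f hf μ hlm
      unfold IsStdMon at hn
      push_neg at hn
      obtain ⟨x, hx, y, hy, hnc⟩ := hn
      obtain ⟨h1, h2⟩ := hnc
      have hxy : x ≠ y := fun h => h1 (le_of_eq h)
      have hele : Finsupp.single x 1 + Finsupp.single y 1 ≤ μ := pair_le (K := K) hx hy hxy
      have hfac : (monomial μ (1:K)) =
          monomial (μ - (Finsupp.single x 1 + Finsupp.single y 1)) 1 * (X x * X y) := by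
        rw [X_mul_X_eq, monomial_mul, one_mul, tsub_add_cancel_of_le hele]
      rw [SetLike.mem_coe, hfac]
      exact Ideal.mul_mem_left _ _ (Ideal.subset_span ⟨x, y, h1, h2, rfl⟩)
    · rw [JHIdeal, Ideal.span_le]
      rintro p ⟨x, y, h1, h2, rfl⟩
      rw [SetLike.mem_coe, X_mul_X_eq]
      exact Ideal.subset_span ⟨srel x y, (hASL2 x y h1 h2).1, _, hlead x y h1 h2, rfl⟩
  refine ⟨hlead, ?_, hJin⟩
  rw [hJin, JHIdeal]
  congr 1
  ext p
  constructor
  · rintro ⟨x, y, h1, h2, rfl⟩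
    exact ⟨x, y, h1, h2, _, hlead x y h1 h2, X_mul_X_eq x y⟩
  · rintro ⟨x, y, h1, h2, μ, hμ, rfl⟩
    have hu := lead_unique σ hσ.1 hμ (hlead x y h1 h2)
    exact ⟨x, y, h1, h2, by rw [hu, X_mul_X_eq]⟩
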